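/- Let n = 2k with k ≥ 2 and let L ⊆ {0,1,...,k} satisfy L = k - L (i.e., i ∈ L iff k - i ∈ L) and L ≠ {0,...,k}. If A, B ⊆ C([2k],k) are non-empty cross L-intersecting families, then |A| + |B| ≤ Σ_{i∈L} C(k,i)·C(k,k-i) + 2. -/

import Mathlib

open Finset
open scoped Classical
noncomputable section Cross5
variable {k : ℕ}
variable {k : ℕ}

/-- the family of all k-subsets of `Fin (2*k)` -/
def Om (k : ℕ) : Finset (Finset (Fin (2*k))) := univ.filter (fun s => s.card = k)

lemma mem_Om {s : Finset (Fin (2*k))} : s ∈ Om k ↔ s.card = k := by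
  simp [Om]

lemma compl_card {s : Finset (Fin (2*k))} (hs : s.card = k) : sᶜ.card = k := by
  rw [Finset.card_compl, hs]
  simp; omega

lemma inter_split {x y : Finset (Fin (2*k))} :
    (x ∩ y).card + (xᶜ ∩ y).card = y.card := by
  have h1 : xᶜ ∩ y = y \ x := by
    ext a; simp [Finset.mem_sdiff, Finset.mem_compl, and_comm]
  have h2 : x ∩ y = y ∩ x := Finset.inter_comm x y
  rw [h1, h2, Finset.card_inter_add_card_sdiff]

lemma inter_card_le_left {x y : Finset (Fin (2*k))} (hx : x.card = k) :
    (x ∩ y).card ≤ k := by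
  have : (x ∩ y).card ≤ x.card := Finset.card_le_card Finset.inter_subset_left
  omega

lemma compl_inter_card {x y : Finset (Fin (2*k))} (hy : y.card = k) :
    (xᶜ ∩ y).card = k - (x ∩ y).card := by
  have := inter_split (x := x) (y := y)
  omega
/-- the `J`-neighbourhood -/
def nb (k : ℕ) (J : Finset ℕ) (X : Finset (Finset (Fin (2*k)))) :
    Finset (Finset (Fin (2*k))) :=
  (Om k).filter (fun y => ∃ x ∈ X, (x ∩ y).card ∈ J)

lemma mem_nb {J : Finset ℕ} {X : Finset (Finset (Fin (2*k)))} {y : Finset (Fin (2*k))} :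
    y ∈ nb k J X ↔ y.card = k ∧ ∃ x ∈ X, (x ∩ y).card ∈ J := by
  simp [nb, mem_Om, Om]

lemma nb_subset_Om {J : Finset ℕ} {X : Finset (Finset (Fin (2*k)))} :
    nb k J X ⊆ Om k := Finset.filter_subset _ _

lemma nb_mono {J : Finset ℕ} {X Y : Finset (Finset (Fin (2*k)))} (h : X ⊆ Y) :
    nb k J X ⊆ nb k J Y := by
  intro y hy
  rw [mem_nb] at hy ⊢
  obtain ⟨h1, x, hx, h2⟩ := hy
  exact ⟨h1, x, h hx, h2⟩

lemma nb_union {J : Finset ℕ} {X Y : Finset (Finset (Fin (2*k)))} :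
    nb k J (X ∪ Y) = nb k J X ∪ nb k J Y := by
  ext y
  simp only [mem_nb, Finset.mem_union]
  constructor
  · rintro ⟨h1, x, hx | hx, h2⟩
    · exact Or.inl ⟨h1, x, hx, h2⟩
    · exact Or.inr ⟨h1, x, hx, h2⟩
  · rintro (⟨h1, x, hx, h2⟩ | ⟨h1, x, hx, h2⟩)
    · exact ⟨h1, x, Or.inl hx, h2⟩
    · exact ⟨h1, x, Or.inr hx, h2⟩

lemma nb_inter_subset {J : Finset ℕ} {X Y : Finset (Finset (Fin (2*k)))} :
    nb k J (X ∩ Y) ⊆ nb k J X ∩ nb k J Y := by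
  intro y hy
  rw [Finset.mem_inter]
  exact ⟨nb_mono Finset.inter_subset_left hy, nb_mono Finset.inter_subset_right hy⟩

/-- sigma-closedness -/
def SC (X : Finset (Finset (Fin (2*k)))) : Prop := ∀ x ∈ X, xᶜ ∈ X

lemma nb_sc {J : Finset ℕ}
    {X : Finset (Finset (Fin (2*k)))} (hXO : X ⊆ Om k) (hX : SC X) : SC (nb k J X) := by
  intro y hy
  rw [mem_nb] at hy ⊢
  obtain ⟨h1, x, hx, h2⟩ := hy
  have hxk : x.card = k := mem_Om.1 (hXO hx)
  refine ⟨compl_card h1, xᶜ, hX x hx, ?_⟩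
  have e1 : (xᶜ ∩ yᶜ).card = (x ∩ y).card := by
    have h3 := inter_split (x := x) (y := y)
    have h4 : (x ∩ yᶜ).card + (xᶜ ∩ yᶜ).card = k := by
      have := inter_split (x := x) (y := yᶜ); rw [compl_card h1] at this; exact this
    have h5 : (x ∩ y).card + (x ∩ yᶜ).card = k := by
      have h6 : (y ∩ x).card + (yᶜ ∩ x).card = k := by
        have := inter_split (x := y) (y := x); rw [hxk] at this; exact this
      rw [Finset.inter_comm y x, Finset.inter_comm yᶜ x] at h6; exact h6
    omega
  rw [e1]; exact h2
-- counting: number of k-sets meeting x in exactly j elements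
lemma count_inter_eq {x : Finset (Fin (2*k))} (hx : x.card = k) {j : ℕ} (hj : j ≤ k) :
    ((Om k).filter (fun y => (x ∩ y).card = j)).card = k.choose j * k.choose (k - j) := by
  have hxc : xᶜ.card = k := by rw [Finset.card_compl, hx]; simp; omega
  have key : ((Om k).filter (fun y => (x ∩ y).card = j)).card
      = ((Finset.powersetCard j x) ×ˢ (Finset.powersetCard (k-j) xᶜ)).card := by
    apply Finset.card_bij' (i := fun y _ => (y ∩ x, y \ x))
      (j := fun p _ => p.1 ∪ p.2)
    · -- membership forward
      intro y hy
      simp only [Finset.mem_filter] at hy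
      obtain ⟨hyO, hyj⟩ := hy
      have hyk : y.card = x.card := by rw [hx]; exact mem_Om.1 hyO
      simp only [Finset.mem_product, Finset.mem_powersetCard]
      refine ⟨⟨Finset.inter_subset_right, ?_⟩, ⟨?_, ?_⟩⟩
      · rw [Finset.inter_comm]; exact hyj
      · intro a ha; simp only [Finset.mem_sdiff] at ha
        simp [Finset.mem_compl, ha.2]
      · have := Finset.card_inter_add_card_sdiff y x
        rw [Finset.inter_comm] at hyj
        omega
    · -- membership backward
      intro p hp
      simp only [Finset.mem_product, Finset.mem_powersetCard] at hp
      obtain ⟨⟨hp1, hp2⟩, hp3, hp4⟩ := hp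
      have hdisj : Disjoint p.1 p.2 := by
        apply Finset.disjoint_left.2
        intro a ha1 ha2
        have := hp1 ha1
        have := hp3 ha2
        simp only [Finset.mem_compl] at this
        exact this ‹a ∈ x›
      simp only [Finset.mem_filter]
      constructor
      · rw [mem_Om, Finset.card_union_of_disjoint hdisj, hp2, hp4]
        omega
      · have : x ∩ (p.1 ∪ p.2) = p.1 := by
          ext a
          simp only [Finset.mem_inter, Finset.mem_union]
          constructor
          · rintro ⟨hax, h1 | h2⟩
            · exact h1
            · exact absurd (Finset.mem_compl.1 (hp3 h2)) (by simp [hax])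
          · intro h; exact ⟨hp1 h, Or.inl h⟩
        rw [this, hp2]
    · -- left inverse
      intro y hy
      ext a
      simp only [Finset.mem_union, Finset.mem_inter, Finset.mem_sdiff]
      tauto
    · -- right inverse
      intro p hp
      simp only [Finset.mem_product, Finset.mem_powersetCard] at hp
      obtain ⟨⟨hp1, hp2⟩, hp3, hp4⟩ := hp
      have h1 : (p.1 ∪ p.2) ∩ x = p.1 := by
        ext a
        simp only [Finset.mem_inter, Finset.mem_union]
        constructor
        · rintro ⟨h1 | h2, hax⟩
          · exact h1
          · exact absurd (Finset.mem_compl.1 (hp3 h2)) (by simp [hax])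
        · intro h; exact ⟨Or.inl h, hp1 h⟩
      have h2 : (p.1 ∪ p.2) \ x = p.2 := by
        ext a
        simp only [Finset.mem_sdiff, Finset.mem_union]
        constructor
        · rintro ⟨h1 | h2, hax⟩
          · exact absurd (hp1 h1) hax
          · exact h2
        · intro h
          refine ⟨Or.inr h, ?_⟩
          have := hp3 h; simp only [Finset.mem_compl] at this; exact this
      rw [h1, h2]
  rw [key, Finset.card_product, Finset.card_powersetCard, Finset.card_powersetCard, hx, hxc]

lemma Om_card : (Om k).card = (2*k).choose k := by
  have : Om k = Finset.powersetCard k (univ : Finset (Fin (2*k))) := by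
    ext s; simp [Om, Finset.mem_powersetCard]
  rw [this, Finset.card_powersetCard, Finset.card_univ, Fintype.card_fin]

lemma vandermonde_2k : (2*k).choose k = ∑ i ∈ range (k+1), k.choose i * k.choose (k - i) := by
  rw [two_mul, Nat.add_choose_eq]
  rw [Finset.Nat.sum_antidiagonal_eq_sum_range_succ_mk]


lemma nb_pair_eq {J : Finset ℕ} (hJsym : ∀ j ≤ k, (j ∈ J ↔ k - j ∈ J))
    {x : Finset (Fin (2*k))} (hx : x.card = k) :
    nb k J {x, xᶜ} = (Om k).filter (fun y => (x ∩ y).card ∈ J) := by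
  ext y
  rw [mem_nb, Finset.mem_filter, mem_Om]
  constructor
  · rintro ⟨h1, z, hz, h2⟩
    simp only [Finset.mem_insert, Finset.mem_singleton] at hz
    rcases hz with rfl | rfl
    · exact ⟨h1, h2⟩
    · refine ⟨h1, ?_⟩
      have e : (xᶜ ∩ y).card = k - (x ∩ y).card := compl_inter_card h1
      have hle : (x ∩ y).card ≤ k := inter_card_le_left hx
      have := (hJsym _ hle)
      rw [e] at h2
      exact this.2 h2
  · rintro ⟨h1, h2⟩
    exact ⟨h1, x, by simp, h2⟩

lemma D_count {J : Finset ℕ} (hJr : J ⊆ range (k+1))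
    {x : Finset (Fin (2*k))} (hx : x.card = k) :
    ((Om k).filter (fun y => (x ∩ y).card ∈ J)).card
      = ∑ j ∈ J, k.choose j * k.choose (k - j) := by
  rw [Finset.card_eq_sum_card_fiberwise
    (f := fun y => (x ∩ y).card) (t := J)
    (by intro y hy; exact (Finset.mem_filter.1 hy).2)]
  apply Finset.sum_congr rfl
  intro j hj
  have hjk : j ≤ k := by have := hJr hj; rw [Finset.mem_range] at this; omega
  rw [Finset.filter_filter]
  rw [← count_inter_eq hx hjk]
  congr 1
  apply Finset.filter_congr
  intro y _
  constructor
  · rintro ⟨_, h⟩; exact h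
  · intro h; exact ⟨by rw [h]; exact hj, h⟩

section Action

variable {J : Finset ℕ}

lemma sImage_card (g : Equiv.Perm (Fin (2*k))) (s : Finset (Fin (2*k))) :
    (s.image ⇑g).card = s.card := Finset.card_image_of_injective _ g.injective

lemma sImage_inter (g : Equiv.Perm (Fin (2*k))) (s t : Finset (Fin (2*k))) :
    (s ∩ t).image ⇑g = s.image ⇑g ∩ t.image ⇑g := Finset.image_inter _ _ g.injective

lemma sImage_compl (g : Equiv.Perm (Fin (2*k))) (s : Finset (Fin (2*k))) :
    sᶜ.image ⇑g = (s.image ⇑g)ᶜ := by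
  ext b
  simp only [Finset.mem_image, Finset.mem_compl]
  constructor
  · rintro ⟨a, ha, rfl⟩ ⟨c, hc, hcb⟩
    exact ha (by rwa [← g.injective hcb])
  · intro h
    refine ⟨g.symm b, fun hs => h ⟨g.symm b, hs, by simp⟩, by simp⟩

lemma sImage_symm_image (g : Equiv.Perm (Fin (2*k))) (s : Finset (Fin (2*k))) :
    (s.image ⇑g).image ⇑g.symm = s := by
  rw [Finset.image_image]
  have : (⇑g.symm ∘ ⇑g) = id := by funext a; simp
  rw [this, Finset.image_id]

lemma sImage_image_symm (g : Equiv.Perm (Fin (2*k))) (s : Finset (Fin (2*k))) :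
    (s.image ⇑g.symm).image ⇑g = s := by
  rw [Finset.image_image]
  have : (⇑g ∘ ⇑g.symm) = id := by funext a; simp
  rw [this, Finset.image_id]

/-- action of a permutation on a family -/
def pact (g : Equiv.Perm (Fin (2*k))) (X : Finset (Finset (Fin (2*k)))) :
    Finset (Finset (Fin (2*k))) := X.image (fun s => s.image ⇑g)

lemma mem_pact {g : Equiv.Perm (Fin (2*k))} {X : Finset (Finset (Fin (2*k)))}
    {z : Finset (Fin (2*k))} : z ∈ pact g X ↔ ∃ s ∈ X, s.image ⇑g = z := by
  simp [pact]

lemma pact_pact_symm (g : Equiv.Perm (Fin (2*k))) (X : Finset (Finset (Fin (2*k)))) :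
    pact g (pact g.symm X) = X := by
  ext z
  simp only [mem_pact]
  constructor
  · rintro ⟨s, ⟨u, hu, rfl⟩, rfl⟩
    rwa [sImage_image_symm]
  · intro hz
    exact ⟨z.image ⇑g.symm, ⟨z, hz, rfl⟩, sImage_image_symm g z⟩

lemma pact_symm_pact (g : Equiv.Perm (Fin (2*k))) (X : Finset (Finset (Fin (2*k)))) :
    pact g.symm (pact g X) = X := by
  have := pact_pact_symm g.symm X
  rwa [Equiv.symm_symm] at this

lemma pact_card (g : Equiv.Perm (Fin (2*k))) (X : Finset (Finset (Fin (2*k)))) :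
    (pact g X).card = X.card := by
  apply Finset.card_image_of_injective
  intro s t hst
  simp only at hst
  have : (s.image ⇑g).image ⇑g.symm = (t.image ⇑g).image ⇑g.symm := by rw [hst]
  rwa [sImage_symm_image, sImage_symm_image] at this

lemma pact_mono {g : Equiv.Perm (Fin (2*k))} {X Y : Finset (Finset (Fin (2*k)))}
    (h : X ⊆ Y) : pact g X ⊆ pact g Y := Finset.image_subset_image h

lemma pact_Om (g : Equiv.Perm (Fin (2*k))) : pact g (Om k) = Om k := by
  ext z
  simp only [mem_pact]
  constructor
  · rintro ⟨s, hs, rfl⟩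
    rw [mem_Om] at hs ⊢
    rw [sImage_card, hs]
  · intro hz
    refine ⟨z.image ⇑g.symm, ?_, sImage_image_symm g z⟩
    rw [mem_Om] at hz ⊢
    rw [sImage_card, hz]

lemma pact_nb_subset (g : Equiv.Perm (Fin (2*k))) (X : Finset (Finset (Fin (2*k)))) :
    pact g (nb k J X) ⊆ nb k J (pact g X) := by
  intro z hz
  rw [mem_pact] at hz
  obtain ⟨y, hy, rfl⟩ := hz
  rw [mem_nb] at hy ⊢
  obtain ⟨h1, x, hx, h2⟩ := hy
  refine ⟨by rw [sImage_card]; exact h1, x.image ⇑g, mem_pact.2 ⟨x, hx, rfl⟩, ?_⟩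
  rw [← sImage_inter, sImage_card]
  exact h2

lemma nb_pact (g : Equiv.Perm (Fin (2*k))) (X : Finset (Finset (Fin (2*k)))) :
    nb k J (pact g X) = pact g (nb k J X) := by
  apply Finset.Subset.antisymm
  · have h := pact_nb_subset (J := J) g.symm (pact g X)
    rw [pact_symm_pact] at h
    have h2 := pact_mono (g := g) h
    rwa [pact_pact_symm] at h2
  · exact pact_nb_subset g X

lemma pact_sc {g : Equiv.Perm (Fin (2*k))} {X : Finset (Finset (Fin (2*k)))}
    (h : SC X) : SC (pact g X) := by
  rintro z hz
  rw [mem_pact] at hz ⊢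
  obtain ⟨s, hs, rfl⟩ := hz
  exact ⟨sᶜ, h s hs, (sImage_compl g s).symm ▸ rfl⟩

end Action

lemma exists_perm4 {α : Type*} [Fintype α] [DecidableEq α]
    {s₁ s₂ s₃ s₄ t₁ t₂ t₃ t₄ : Finset α}
    (hcov : ∀ a, a ∈ s₁ ∨ a ∈ s₂ ∨ a ∈ s₃ ∨ a ∈ s₄)
    (hs12 : Disjoint s₁ s₂) (hs13 : Disjoint s₁ s₃) (hs14 : Disjoint s₁ s₄)
    (hs23 : Disjoint s₂ s₃) (hs24 : Disjoint s₂ s₄) (hs34 : Disjoint s₃ s₄)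
    (ht12 : Disjoint t₁ t₂) (ht13 : Disjoint t₁ t₃) (ht14 : Disjoint t₁ t₄)
    (ht23 : Disjoint t₂ t₃) (ht24 : Disjoint t₂ t₄) (ht34 : Disjoint t₃ t₄)
    (h1 : s₁.card = t₁.card) (h2 : s₂.card = t₂.card)
    (h3 : s₃.card = t₃.card) (h4 : s₄.card = t₄.card) :
    ∃ g : Equiv.Perm α, s₁.image ⇑g = t₁ ∧ s₂.image ⇑g = t₂ ∧
      s₃.image ⇑g = t₃ ∧ s₄.image ⇑g = t₄ := by
  classical
  let e₁ := Finset.equivOfCardEq h1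
  let e₂ := Finset.equivOfCardEq h2
  let e₃ := Finset.equivOfCardEq h3
  let e₄ := Finset.equivOfCardEq h4
  set F : α → α := fun a =>
    if ha : a ∈ s₁ then ↑(e₁ ⟨a, ha⟩)
    else if ha : a ∈ s₂ then ↑(e₂ ⟨a, ha⟩)
    else if ha : a ∈ s₃ then ↑(e₃ ⟨a, ha⟩)
    else if ha : a ∈ s₄ then ↑(e₄ ⟨a, ha⟩)
    else a with hF
  have b1 : ∀ a (ha : a ∈ s₁), F a = ↑(e₁ ⟨a, ha⟩) := by
    intro a ha; simp only [hF, dif_pos ha]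
  have b2 : ∀ a (ha : a ∈ s₂), F a = ↑(e₂ ⟨a, ha⟩) := by
    intro a ha
    have n1 : a ∉ s₁ := Finset.disjoint_right.mp hs12 ha
    simp only [hF, dif_neg n1, dif_pos ha]
  have b3 : ∀ a (ha : a ∈ s₃), F a = ↑(e₃ ⟨a, ha⟩) := by
    intro a ha
    have n1 : a ∉ s₁ := Finset.disjoint_right.mp hs13 ha
    have n2 : a ∉ s₂ := Finset.disjoint_right.mp hs23 ha
    simp only [hF, dif_neg n1, dif_neg n2, dif_pos ha]
  have b4 : ∀ a (ha : a ∈ s₄), F a = ↑(e₄ ⟨a, ha⟩) := by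
    intro a ha
    have n1 : a ∉ s₁ := Finset.disjoint_right.mp hs14 ha
    have n2 : a ∉ s₂ := Finset.disjoint_right.mp hs24 ha
    have n3 : a ∉ s₃ := Finset.disjoint_right.mp hs34 ha
    simp only [hF, dif_neg n1, dif_neg n2, dif_neg n3, dif_pos ha]
  have loc : ∀ a, (∃ h : a ∈ s₁, F a = ↑(e₁ ⟨a, h⟩)) ∨ (∃ h : a ∈ s₂, F a = ↑(e₂ ⟨a, h⟩))
      ∨ (∃ h : a ∈ s₃, F a = ↑(e₃ ⟨a, h⟩)) ∨ (∃ h : a ∈ s₄, F a = ↑(e₄ ⟨a, h⟩)) := by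
    intro a
    rcases hcov a with h | h | h | h
    · exact Or.inl ⟨h, b1 a h⟩
    · exact Or.inr (Or.inl ⟨h, b2 a h⟩)
    · exact Or.inr (Or.inr (Or.inl ⟨h, b3 a h⟩))
    · exact Or.inr (Or.inr (Or.inr ⟨h, b4 a h⟩))
  have hinj : Function.Injective F := by
    intro a b hab
    rcases loc a with ⟨ha, ea⟩ | ⟨ha, ea⟩ | ⟨ha, ea⟩ | ⟨ha, ea⟩ <;>
      rcases loc b with ⟨hb, eb⟩ | ⟨hb, eb⟩ | ⟨hb, eb⟩ | ⟨hb, eb⟩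
    · have hcoe : (↑(e₁ ⟨a, ha⟩) : α) = ↑(e₁ ⟨b, hb⟩) := by rw [← ea, ← eb, hab]
      have h' := e₁.injective (Subtype.coe_injective hcoe)
      exact congrArg Subtype.val h'
    · exfalso
      have m1 : F a ∈ t₁ := by rw [ea]; exact (e₁ ⟨a, ha⟩).2
      have m2 : F a ∈ t₂ := by rw [hab, eb]; exact (e₂ ⟨b, hb⟩).2
      exact Finset.disjoint_left.mp ht12 m1 m2
    · exfalso
      have m1 : F a ∈ t₁ := by rw [ea]; exact (e₁ ⟨a, ha⟩).2
      have m2 : F a ∈ t₃ := by rw [hab, eb]; exact (e₃ ⟨b, hb⟩).2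
      exact Finset.disjoint_left.mp ht13 m1 m2
    · exfalso
      have m1 : F a ∈ t₁ := by rw [ea]; exact (e₁ ⟨a, ha⟩).2
      have m2 : F a ∈ t₄ := by rw [hab, eb]; exact (e₄ ⟨b, hb⟩).2
      exact Finset.disjoint_left.mp ht14 m1 m2
    · exfalso
      have m1 : F a ∈ t₂ := by rw [ea]; exact (e₂ ⟨a, ha⟩).2
      have m2 : F a ∈ t₁ := by rw [hab, eb]; exact (e₁ ⟨b, hb⟩).2
      exact Finset.disjoint_right.mp ht12 m1 m2
    · have hcoe : (↑(e₂ ⟨a, ha⟩) : α) = ↑(e₂ ⟨b, hb⟩) := by rw [← ea, ← eb, hab]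
      have h' := e₂.injective (Subtype.coe_injective hcoe)
      exact congrArg Subtype.val h'
    · exfalso
      have m1 : F a ∈ t₂ := by rw [ea]; exact (e₂ ⟨a, ha⟩).2
      have m2 : F a ∈ t₃ := by rw [hab, eb]; exact (e₃ ⟨b, hb⟩).2
      exact Finset.disjoint_left.mp ht23 m1 m2
    · exfalso
      have m1 : F a ∈ t₂ := by rw [ea]; exact (e₂ ⟨a, ha⟩).2
      have m2 : F a ∈ t₄ := by rw [hab, eb]; exact (e₄ ⟨b, hb⟩).2
      exact Finset.disjoint_left.mp ht24 m1 m2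
    · exfalso
      have m1 : F a ∈ t₃ := by rw [ea]; exact (e₃ ⟨a, ha⟩).2
      have m2 : F a ∈ t₁ := by rw [hab, eb]; exact (e₁ ⟨b, hb⟩).2
      exact Finset.disjoint_right.mp ht13 m1 m2
    · exfalso
      have m1 : F a ∈ t₃ := by rw [ea]; exact (e₃ ⟨a, ha⟩).2
      have m2 : F a ∈ t₂ := by rw [hab, eb]; exact (e₂ ⟨b, hb⟩).2
      exact Finset.disjoint_right.mp ht23 m1 m2
    · have hcoe : (↑(e₃ ⟨a, ha⟩) : α) = ↑(e₃ ⟨b, hb⟩) := by rw [← ea, ← eb, hab]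
      have h' := e₃.injective (Subtype.coe_injective hcoe)
      exact congrArg Subtype.val h'
    · exfalso
      have m1 : F a ∈ t₃ := by rw [ea]; exact (e₃ ⟨a, ha⟩).2
      have m2 : F a ∈ t₄ := by rw [hab, eb]; exact (e₄ ⟨b, hb⟩).2
      exact Finset.disjoint_left.mp ht34 m1 m2
    · exfalso
      have m1 : F a ∈ t₄ := by rw [ea]; exact (e₄ ⟨a, ha⟩).2
      have m2 : F a ∈ t₁ := by rw [hab, eb]; exact (e₁ ⟨b, hb⟩).2
      exact Finset.disjoint_right.mp ht14 m1 m2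
    · exfalso
      have m1 : F a ∈ t₄ := by rw [ea]; exact (e₄ ⟨a, ha⟩).2
      have m2 : F a ∈ t₂ := by rw [hab, eb]; exact (e₂ ⟨b, hb⟩).2
      exact Finset.disjoint_right.mp ht24 m1 m2
    · exfalso
      have m1 : F a ∈ t₄ := by rw [ea]; exact (e₄ ⟨a, ha⟩).2
      have m2 : F a ∈ t₃ := by rw [hab, eb]; exact (e₃ ⟨b, hb⟩).2
      exact Finset.disjoint_right.mp ht34 m1 m2
    · have hcoe : (↑(e₄ ⟨a, ha⟩) : α) = ↑(e₄ ⟨b, hb⟩) := by rw [← ea, ← eb, hab]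
      have h' := e₄.injective (Subtype.coe_injective hcoe)
      exact congrArg Subtype.val h'
  have hbij : Function.Bijective F := Finite.injective_iff_bijective.mp hinj
  refine ⟨Equiv.ofBijective F hbij, ?_, ?_, ?_, ?_⟩
  all_goals (
    apply Finset.eq_of_subset_of_card_le
    · intro z hz
      rw [Finset.mem_image] at hz
      obtain ⟨a, ha, rfl⟩ := hz
      show F a ∈ _
      first
      | (rw [b1 a ha]; exact (e₁ ⟨a, ha⟩).2)
      | (rw [b2 a ha]; exact (e₂ ⟨a, ha⟩).2)
      | (rw [b3 a ha]; exact (e₃ ⟨a, ha⟩).2)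
      | (rw [b4 a ha]; exact (e₄ ⟨a, ha⟩).2)
    · rw [Finset.card_image_of_injective _ (Equiv.ofBijective F hbij).injective]
      omega)

section Atoms

variable {J : Finset ℕ}

/-- validity of a fragment -/
def Vd (k : ℕ) (J : Finset ℕ) (X : Finset (Finset (Fin (2*k)))) : Prop :=
  X ⊆ Om k ∧ SC X ∧ X.Nonempty ∧ nb k J X ≠ Om k

/-- the (integer) defect functional -/
def fI (k : ℕ) (J : Finset ℕ) (X : Finset (Finset (Fin (2*k)))) : ℤ :=
  ((nb k J X).card : ℤ) - (X.card : ℤ)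

lemma sc_inter {X Y : Finset (Finset (Fin (2*k)))} (hX : SC X) (hY : SC Y) :
    SC (X ∩ Y) := by
  intro z hz
  rw [Finset.mem_inter] at hz ⊢
  exact ⟨hX z hz.1, hY z hz.2⟩

lemma sc_union {X Y : Finset (Finset (Fin (2*k)))} (hX : SC X) (hY : SC Y) :
    SC (X ∪ Y) := by
  intro z hz
  rw [Finset.mem_union] at hz ⊢
  rcases hz with h | h
  · exact Or.inl (hX z h)
  · exact Or.inr (hY z h)

lemma sc_Om : SC (Om k) := by
  intro z hz
  rw [mem_Om] at hz ⊢
  exact compl_card hz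

lemma sc_sdiff {X Y : Finset (Finset (Fin (2*k)))} (hX : SC X) (hY : SC Y) :
    SC (X \ Y) := by
  intro z hz
  rw [Finset.mem_sdiff] at hz ⊢
  refine ⟨hX z hz.1, fun hc => hz.2 ?_⟩
  have := hY _ hc
  rwa [compl_compl] at this

lemma two_le_card_sc {X : Finset (Finset (Fin (2*k)))} (hk : 0 < k) (hXO : X ⊆ Om k)
    (hSC : SC X) (hne : X.Nonempty) : 2 ≤ X.card := by
  obtain ⟨z, hz⟩ := hne
  have hzc := hSC z hz
  have hzk : z.card = k := mem_Om.1 (hXO hz)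
  have hne' : z ≠ zᶜ := by
    intro h
    have h0 : z ∩ zᶜ = ∅ := Finset.inter_compl z
    rw [← h, Finset.inter_self] at h0
    rw [h0] at hzk
    simp at hzk
    omega
  have := Finset.one_lt_card.2 ⟨z, hz, zᶜ, hzc, hne'⟩
  omega

set_option maxHeartbeats 1000000 in
/-- duality: the complementary fragment -/
lemma dual_valid {X : Finset (Finset (Fin (2*k)))} (hV : Vd k J X) :
    Vd k J (Om k \ nb k J X) ∧ fI k J (Om k \ nb k J X) ≤ fI k J X := by
  obtain ⟨hXO, hSC, hne, hnb⟩ := hV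
  have hsub : nb k J X ⊆ Om k := nb_subset_Om
  have hXdne : (Om k \ nb k J X).Nonempty := by
    rw [Finset.sdiff_nonempty]
    intro hcon
    exact hnb (Finset.Subset.antisymm hsub hcon)
  have hkey : nb k J (Om k \ nb k J X) ⊆ Om k \ X := by
    intro z hz
    rw [mem_nb] at hz
    obtain ⟨h1, w, hw, h2⟩ := hz
    rw [Finset.mem_sdiff] at hw ⊢
    refine ⟨by rw [mem_Om]; exact h1, fun hzX => hw.2 ?_⟩
    rw [mem_nb]
    refine ⟨mem_Om.1 (hw.1), z, hzX, ?_⟩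
    rwa [Finset.inter_comm]
  have hXsub : X ⊆ Om k := hXO
  refine ⟨⟨Finset.sdiff_subset, sc_sdiff sc_Om (nb_sc hXO hSC), hXdne, ?_⟩, ?_⟩
  · intro hcon
    rw [hcon] at hkey
    obtain ⟨x, hx⟩ := hne
    have := hkey (hXO hx)
    rw [Finset.mem_sdiff] at this
    exact this.2 hx
  · have e1 : (Om k \ nb k J X).card = (Om k).card - (nb k J X).card :=
      Finset.card_sdiff_of_subset hsub
    have e2 : (Om k \ X).card = (Om k).card - X.card := Finset.card_sdiff_of_subset hXsub
    have e3 : (nb k J (Om k \ nb k J X)).card ≤ (Om k).card - X.card := by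
      rw [← e2]; exact Finset.card_le_card hkey
    have e4 : X.card ≤ (Om k).card := Finset.card_le_card hXsub
    have e5 : (nb k J X).card ≤ (Om k).card := Finset.card_le_card hsub
    unfold fI
    omega

/-- submodularity -/
lemma submod (X Y : Finset (Finset (Fin (2*k)))) :
    fI k J (X ∩ Y) + fI k J (X ∪ Y) ≤ fI k J X + fI k J Y := by
  have h1 : (nb k J (X ∩ Y)).card ≤ (nb k J X ∩ nb k J Y).card :=
    Finset.card_le_card nb_inter_subset
  have h2 : (nb k J (X ∪ Y)).card = (nb k J X ∪ nb k J Y).card := by rw [nb_union]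
  have h3 : (nb k J X ∩ nb k J Y).card + (nb k J X ∪ nb k J Y).card
      = (nb k J X).card + (nb k J Y).card := by
    rw [add_comm]
    exact Finset.card_union_add_card_inter _ _
  have h4 : (X ∩ Y).card + (X ∪ Y).card = X.card + Y.card := by
    rw [add_comm]
    exact Finset.card_union_add_card_inter _ _
  unfold fI
  omega

lemma nb_Om_self (hJr : J ⊆ range (k+1)) (hJne : J.Nonempty) :
    nb k J (Om k) = Om k := by
  apply Finset.Subset.antisymm nb_subset_Om
  intro y hy
  have hyk : y.card = k := mem_Om.1 hy
  obtain ⟨j, hj⟩ := hJne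
  have hjk : j ≤ k := by have := hJr hj; rw [Finset.mem_range] at this; omega
  obtain ⟨S, hSy, hScard⟩ := Finset.exists_subset_card_eq (s := y) (n := j) (by rw [hyk]; exact hjk)
  obtain ⟨T, hTy, hTcard⟩ := Finset.exists_subset_card_eq (s := yᶜ) (n := k - j)
    (by rw [compl_card hyk]; omega)
  have hdisj : Disjoint S T := by
    rw [Finset.disjoint_left]
    intro a haS haT
    have := hTy haT
    rw [Finset.mem_compl] at this
    exact this (hSy haS)
  have hxcard : (S ∪ T).card = k := by
    rw [Finset.card_union_of_disjoint hdisj, hScard, hTcard]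
    omega
  have hinter : (S ∪ T) ∩ y = S := by
    ext a
    simp only [Finset.mem_inter, Finset.mem_union]
    constructor
    · rintro ⟨hS | hT, hay⟩
      · exact hS
      · exact absurd hay (Finset.mem_compl.1 (hTy hT))
    · intro h
      exact ⟨Or.inl h, hSy h⟩
  rw [mem_nb]
  refine ⟨hyk, S ∪ T, by rw [mem_Om]; exact hxcard, ?_⟩
  rw [hinter, hScard]
  exact hj

lemma stab {A₀ : Finset (Finset (Fin (2*k)))}
    (hA₀O : A₀ ⊆ Om k) (hSC : SC A₀)
    (hblock : ∀ g : Equiv.Perm (Fin (2*k)), (A₀ ∩ pact g A₀).Nonempty → pact g A₀ = A₀)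
    {x y : Finset (Fin (2*k))} (hx : x ∈ A₀) (hy : y ∈ A₀)
    (ht1 : 1 ≤ (x ∩ y).card) (ht2 : (x ∩ y).card < k)
    {y' : Finset (Fin (2*k))} (hy'k : y'.card = k)
    (hclass : (x ∩ y').card = (x ∩ y).card ∨ (x ∩ y').card + (x ∩ y).card = k) :
    y' ∈ A₀ := by
  have hxk : x.card = k := mem_Om.1 (hA₀O hx)
  have hyk : y.card = k := mem_Om.1 (hA₀O hy)
  have hcard2k : Fintype.card (Fin (2*k)) = 2*k := by simp
  have main : ∀ z : Finset (Fin (2*k)), z.card = k → (x ∩ z).card = (x ∩ y).card →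
      z ∈ A₀ := by
    intro z hzk hzt
    have hcov : ∀ a : Fin (2*k), a ∈ x ∩ y ∨ a ∈ x \ y ∨ a ∈ y \ x ∨ a ∈ (x ∪ y)ᶜ := by
      intro a
      simp only [Finset.mem_inter, Finset.mem_sdiff, Finset.mem_compl, Finset.mem_union]
      tauto
    have c2 : (x \ y).card = (x \ z).card := by
      have a1 := Finset.card_inter_add_card_sdiff x y
      have a2 := Finset.card_inter_add_card_sdiff x z
      omega
    have c3 : (y \ x).card = (z \ x).card := by
      have a1 := Finset.card_inter_add_card_sdiff y x
      have a2 := Finset.card_inter_add_card_sdiff z x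
      rw [Finset.inter_comm y x] at a1
      rw [Finset.inter_comm z x] at a2
      omega
    have c4 : ((x ∪ y)ᶜ).card = ((x ∪ z)ᶜ).card := by
      have a1 := Finset.card_union_add_card_inter x y
      have a2 := Finset.card_union_add_card_inter x z
      have b1 := Finset.card_compl (x ∪ y)
      have b2 := Finset.card_compl (x ∪ z)
      rw [hcard2k] at b1 b2
      have u1 : (x ∪ y).card ≤ 2*k := by
        have := Finset.card_le_univ (x ∪ y); rwa [hcard2k] at this
      have u2 : (x ∪ z).card ≤ 2*k := by
        have := Finset.card_le_univ (x ∪ z); rwa [hcard2k] at this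
      omega
    obtain ⟨g, hg1, hg2, hg3, hg4⟩ := exists_perm4 (α := Fin (2*k))
      (s₁ := x ∩ y) (s₂ := x \ y) (s₃ := y \ x) (s₄ := (x ∪ y)ᶜ)
      (t₁ := x ∩ z) (t₂ := x \ z) (t₃ := z \ x) (t₄ := (x ∪ z)ᶜ)
      hcov
      (Finset.disjoint_left.2 (by intro a h1 h2; simp only [Finset.mem_inter,
        Finset.mem_sdiff] at h1 h2; tauto))
      (Finset.disjoint_left.2 (by intro a h1 h2; simp only [Finset.mem_inter,
        Finset.mem_sdiff] at h1 h2; tauto))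
      (Finset.disjoint_left.2 (by intro a h1 h2; simp only [Finset.mem_inter,
        Finset.mem_compl, Finset.mem_union] at h1 h2; tauto))
      (Finset.disjoint_left.2 (by intro a h1 h2; simp only [Finset.mem_sdiff] at h1 h2; tauto))
      (Finset.disjoint_left.2 (by intro a h1 h2; simp only [Finset.mem_sdiff,
        Finset.mem_compl, Finset.mem_union] at h1 h2; tauto))
      (Finset.disjoint_left.2 (by intro a h1 h2; simp only [Finset.mem_sdiff,
        Finset.mem_compl, Finset.mem_union] at h1 h2; tauto))
      (Finset.disjoint_left.2 (by intro a h1 h2; simp only [Finset.mem_inter,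
        Finset.mem_sdiff] at h1 h2; tauto))
      (Finset.disjoint_left.2 (by intro a h1 h2; simp only [Finset.mem_inter,
        Finset.mem_sdiff] at h1 h2; tauto))
      (Finset.disjoint_left.2 (by intro a h1 h2; simp only [Finset.mem_inter,
        Finset.mem_compl, Finset.mem_union] at h1 h2; tauto))
      (Finset.disjoint_left.2 (by intro a h1 h2; simp only [Finset.mem_sdiff] at h1 h2; tauto))
      (Finset.disjoint_left.2 (by intro a h1 h2; simp only [Finset.mem_sdiff,
        Finset.mem_compl, Finset.mem_union] at h1 h2; tauto))
      (Finset.disjoint_left.2 (by intro a h1 h2; simp only [Finset.mem_sdiff,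
        Finset.mem_compl, Finset.mem_union] at h1 h2; tauto))
      hzt.symm c2 c3 c4
    have hxsplit : (x ∩ y) ∪ (x \ y) = x := by
      ext a; simp only [Finset.mem_union, Finset.mem_inter, Finset.mem_sdiff]; tauto
    have hxsplit' : (x ∩ z) ∪ (x \ z) = x := by
      ext a; simp only [Finset.mem_union, Finset.mem_inter, Finset.mem_sdiff]; tauto
    have hysplit : (x ∩ y) ∪ (y \ x) = y := by
      ext a; simp only [Finset.mem_union, Finset.mem_inter, Finset.mem_sdiff]; tauto
    have hzsplit : (x ∩ z) ∪ (z \ x) = z := by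
      ext a; simp only [Finset.mem_union, Finset.mem_inter, Finset.mem_sdiff]; tauto
    have hxx : x.image ⇑g = x := by
      calc x.image ⇑g = ((x ∩ y) ∪ (x \ y)).image ⇑g := by rw [hxsplit]
        _ = (x ∩ y).image ⇑g ∪ (x \ y).image ⇑g := Finset.image_union _ _
        _ = (x ∩ z) ∪ (x \ z) := by rw [hg1, hg2]
        _ = x := hxsplit'
    have hyz : y.image ⇑g = z := by
      calc y.image ⇑g = ((x ∩ y) ∪ (y \ x)).image ⇑g := by rw [hysplit]
        _ = (x ∩ y).image ⇑g ∪ (y \ x).image ⇑g := Finset.image_union _ _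
        _ = (x ∩ z) ∪ (z \ x) := by rw [hg1, hg3]
        _ = z := hzsplit
    have hmem : x ∈ pact g A₀ := mem_pact.2 ⟨x, hx, hxx⟩
    have hne : (A₀ ∩ pact g A₀).Nonempty := ⟨x, Finset.mem_inter.2 ⟨hx, hmem⟩⟩
    have heq := hblock g hne
    have hz' : z ∈ pact g A₀ := mem_pact.2 ⟨y, hy, hyz⟩
    rwa [heq] at hz'
  rcases hclass with h | h
  · exact main y' hy'k h
  · have hcc : (x ∩ y'ᶜ).card = (x ∩ y).card := by
      have i1 := inter_split (x := y') (y := x)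
      rw [hxk] at i1
      rw [Finset.inter_comm y' x, Finset.inter_comm y'ᶜ x] at i1
      omega
    have h2 : y'ᶜ ∈ A₀ := main y'ᶜ (compl_card hy'k) hcc
    have h3 := hSC _ h2
    rwa [compl_compl] at h3

theorem expansion (hk : 2 ≤ k) {J : Finset ℕ} (hJr : J ⊆ range (k+1))
    (hJsym : ∀ j ≤ k, (j ∈ J ↔ k - j ∈ J)) (hJne : J.Nonempty)
    {X : Finset (Finset (Fin (2*k)))} (hV : Vd k J X) :
    X.card + (∑ j ∈ J, k.choose j * k.choose (k-j)) ≤ (nb k J X).card + 2 := by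
  by_contra hcon
  push_neg at hcon
  set D : ℕ := ∑ j ∈ J, k.choose j * k.choose (k-j) with hD
  set 𝒱 : Finset (Finset (Finset (Fin (2*k)))) := Finset.univ.filter (Vd k J) with h𝒱
  have hmem𝒱 : ∀ Z, Z ∈ 𝒱 ↔ Vd k J Z := by intro Z; simp [h𝒱]
  have h𝒱ne : 𝒱.Nonempty := ⟨X, (hmem𝒱 X).2 hV⟩
  obtain ⟨Y₀, hY₀, hY₀min⟩ := Finset.exists_min_image 𝒱 (fI k J) h𝒱ne
  set μ : ℤ := fI k J Y₀ with hμ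
  have hμmin : ∀ Z, Vd k J Z → μ ≤ fI k J Z := fun Z hZ => hY₀min Z ((hmem𝒱 Z).2 hZ)
  set 𝒜 := 𝒱.filter (fun Z => fI k J Z = μ) with h𝒜
  have h𝒜ne : 𝒜.Nonempty := ⟨Y₀, Finset.mem_filter.2 ⟨hY₀, rfl⟩⟩
  obtain ⟨A₀, hA₀mem, hA₀min⟩ := Finset.exists_min_image 𝒜 (fun Z => Z.card) h𝒜ne
  have hA₀V : Vd k J A₀ := (hmem𝒱 _).1 (Finset.mem_filter.1 hA₀mem).1
  have hA₀μ : fI k J A₀ = μ := (Finset.mem_filter.1 hA₀mem).2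
  have hamin : ∀ Z, Vd k J Z → fI k J Z = μ → A₀.card ≤ Z.card := by
    intro Z h1 h2
    exact hA₀min Z (Finset.mem_filter.2 ⟨(hmem𝒱 Z).2 h1, h2⟩)
  have hA₀O : A₀ ⊆ Om k := hA₀V.1
  have hA₀SC : SC A₀ := hA₀V.2.1
  have hA₀ne : A₀.Nonempty := hA₀V.2.2.1
  have hA₀nb : nb k J A₀ ≠ Om k := hA₀V.2.2.2
  have hμle : μ ≤ (D : ℤ) - 3 := by
    have h1 := hμmin X hV
    simp only [fI] at h1
    omega
  -- block property of the atom
  have hblock : ∀ g : Equiv.Perm (Fin (2*k)), (A₀ ∩ pact g A₀).Nonempty →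
      pact g A₀ = A₀ := by
    intro g hgne
    have hYO : pact g A₀ ⊆ Om k := by
      rw [← pact_Om g]; exact pact_mono hA₀O
    have hYSC : SC (pact g A₀) := pact_sc hA₀SC
    have hYne : (pact g A₀).Nonempty := hA₀ne.image _
    have hYnbcard : (nb k J (pact g A₀)).card = (nb k J A₀).card := by
      rw [nb_pact, pact_card]
    have hYcard : (pact g A₀).card = A₀.card := pact_card g A₀
    have hYnb : nb k J (pact g A₀) ≠ Om k := by
      intro hcon2
      apply hA₀nb
      rw [nb_pact] at hcon2
      have h5 : pact g.symm (pact g (nb k J A₀)) = pact g.symm (Om k) := by rw [hcon2]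
      rwa [pact_symm_pact, pact_Om] at h5
    have hYV : Vd k J (pact g A₀) := ⟨hYO, hYSC, hYne, hYnb⟩
    have hYμ : fI k J (pact g A₀) = μ := by
      rw [← hA₀μ]; simp only [fI]; rw [hYnbcard, hYcard]
    -- Z := A₀ ∩ pact g A₀ is valid
    have hZO : A₀ ∩ pact g A₀ ⊆ Om k := Finset.inter_subset_left.trans hA₀O
    have hZSC : SC (A₀ ∩ pact g A₀) := sc_inter hA₀SC hYSC
    have hZnb : nb k J (A₀ ∩ pact g A₀) ≠ Om k := by
      intro hcon2
      apply hA₀nb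
      apply Finset.Subset.antisymm nb_subset_Om
      rw [← hcon2]
      exact nb_mono Finset.inter_subset_left
    have hZV : Vd k J (A₀ ∩ pact g A₀) := ⟨hZO, hZSC, hgne, hZnb⟩
    have hμZ := hμmin _ hZV
    by_cases hcase : nb k J (A₀ ∪ pact g A₀) = Om k
    · exfalso
      have hZ2 : 2 ≤ (A₀ ∩ pact g A₀).card := two_le_card_sc (by omega) hZO hZSC hgne
      obtain ⟨hdV, hdle⟩ := dual_valid (J := J) hA₀V
      have hdeq : fI k J (Om k \ nb k J A₀) = μ :=
        le_antisymm (by rw [← hA₀μ]; exact hdle) (hμmin _ hdV)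
      have hdcard : A₀.card ≤ (Om k \ nb k J A₀).card := hamin _ hdV hdeq
      have hsd : (Om k \ nb k J A₀).card = (Om k).card - (nb k J A₀).card :=
        Finset.card_sdiff_of_subset nb_subset_Om
      have hn0N : (nb k J A₀).card ≤ (Om k).card := Finset.card_le_card nb_subset_Om
      have hNcard : (nb k J A₀ ∪ nb k J (pact g A₀)).card = (Om k).card := by
        rw [← nb_union, hcase]
      have hIU := Finset.card_union_add_card_inter (nb k J A₀) (nb k J (pact g A₀))
      have hsubZ : (nb k J (A₀ ∩ pact g A₀)).card
          ≤ (nb k J A₀ ∩ nb k J (pact g A₀)).card := Finset.card_le_card nb_inter_subset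
      simp only [fI] at hμZ hA₀μ
      omega
    · have hUV : Vd k J (A₀ ∪ pact g A₀) :=
        ⟨Finset.union_subset hA₀O hYO, sc_union hA₀SC hYSC,
          hA₀ne.mono Finset.subset_union_left, hcase⟩
      have hμU := hμmin _ hUV
      have hsub := submod (J := J) A₀ (pact g A₀)
      have hZμ : fI k J (A₀ ∩ pact g A₀) = μ := by
        have := hA₀μ; have := hYμ; omega
      have hcardle : A₀.card ≤ (A₀ ∩ pact g A₀).card := hamin _ hZV hZμ
      have hZeq : A₀ ∩ pact g A₀ = A₀ :=
        Finset.eq_of_subset_of_card_le Finset.inter_subset_left hcardle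
      have hAY : A₀ ⊆ pact g A₀ := Finset.inter_eq_left.1 hZeq
      exact (Finset.eq_of_subset_of_card_le hAY (le_of_eq hYcard)).symm
  -- the atom has at least 3 elements
  have h2a : 2 ≤ A₀.card := two_le_card_sc (by omega) hA₀O hA₀SC hA₀ne
  have h3a : 3 ≤ A₀.card := by
    by_contra hle
    push_neg at hle
    obtain ⟨z, hz⟩ := hA₀ne
    have hzc := hA₀SC z hz
    have hzk : z.card = k := mem_Om.1 (hA₀O hz)
    have hzne : z ≠ zᶜ := by
      intro h
      have h0 : z ∩ zᶜ = ∅ := Finset.inter_compl z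
      rw [← h, Finset.inter_self] at h0
      rw [h0] at hzk; simp at hzk; omega
    have hsub2 : ({z, zᶜ} : Finset (Finset (Fin (2*k)))) ⊆ A₀ := by
      intro w hw
      simp only [Finset.mem_insert, Finset.mem_singleton] at hw
      rcases hw with rfl | rfl
      · exact hz
      · exact hzc
    have hc2 : ({z, zᶜ} : Finset (Finset (Fin (2*k)))).card = 2 := by
      rw [Finset.card_insert_of_notMem (by simp [hzne]), Finset.card_singleton]
    have hAeq : A₀ = {z, zᶜ} :=
      (Finset.eq_of_subset_of_card_le hsub2 (by omega)).symm
    have hnbcard : (nb k J A₀).card = D := by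
      rw [hAeq, nb_pair_eq hJsym hzk, hD]
      exact D_count hJr hzk
    have : fI k J A₀ = (D : ℤ) - 2 := by
      simp only [fI]
      rw [hnbcard, hAeq, hc2]
      push_cast; ring
    omega
  -- pick x and y
  obtain ⟨x, hx⟩ := hA₀ne
  have hxc := hA₀SC x hx
  have hxk : x.card = k := mem_Om.1 (hA₀O hx)
  have hcard2k : Fintype.card (Fin (2*k)) = 2*k := by simp
  have hyex : ∃ y ∈ A₀, y ≠ x ∧ y ≠ xᶜ := by
    by_contra hcon2
    push_neg at hcon2
    have hsub2 : A₀ ⊆ {x, xᶜ} := by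
      intro w hw
      simp only [Finset.mem_insert, Finset.mem_singleton]
      by_contra hnw
      push_neg at hnw
      exact hnw.2 ((hcon2 w hw hnw.1))
    have := Finset.card_le_card hsub2
    have h22 : ({x, xᶜ} : Finset (Finset (Fin (2*k)))).card ≤ 2 := by
      apply le_trans (Finset.card_insert_le _ _); simp
    omega
  obtain ⟨y, hy, hyx1, hyx2⟩ := hyex
  have hyk : y.card = k := mem_Om.1 (hA₀O hy)
  have ht1 : 1 ≤ (x ∩ y).card := by
    by_contra hcon2
    push_neg at hcon2
    have h0 : x ∩ y = ∅ := Finset.card_eq_zero.1 (by omega)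
    have hsub : y ⊆ xᶜ := by
      intro a ha
      rw [Finset.mem_compl]
      intro hax
      have : a ∈ x ∩ y := Finset.mem_inter.2 ⟨hax, ha⟩
      rw [h0] at this; simp at this
    have : y = xᶜ := Finset.eq_of_subset_of_card_le hsub (by rw [compl_card hxk, hyk])
    exact hyx2 this
  have ht2 : (x ∩ y).card < k := by
    by_contra hcon2
    push_neg at hcon2
    have hle' : (x ∩ y).card ≤ k := inter_card_le_left hxk
    have hxy : x ∩ y = x := Finset.eq_of_subset_of_card_le Finset.inter_subset_left
      (by omega)
    have hxsuby : x ⊆ y := Finset.inter_eq_left.1 hxy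
    have : x = y := Finset.eq_of_subset_of_card_le hxsuby (by omega)
    exact hyx1 this.symm
  -- the seed swap
  have hsd1 : (y ∩ x).card + (y \ x).card = y.card := Finset.card_inter_add_card_sdiff y x
  have hyxne : (y \ x).Nonempty := by
    rw [← Finset.card_pos]
    rw [Finset.inter_comm y x] at hsd1
    omega
  obtain ⟨u₀, hu₀⟩ := hyxne
  rw [Finset.mem_sdiff] at hu₀
  have hucup := Finset.card_union_add_card_inter x y
  have hcomplc := Finset.card_compl (x ∪ y)
  rw [hcard2k] at hcomplc
  have hrestne : ((x ∪ y)ᶜ).Nonempty := by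
    rw [← Finset.card_pos, hcomplc]
    omega
  obtain ⟨v₀, hv₀⟩ := hrestne
  rw [Finset.mem_compl, Finset.mem_union] at hv₀
  push_neg at hv₀
  have hy₂k : (insert v₀ (y.erase u₀)).card = k := by
    rw [Finset.card_insert_of_notMem (by
      intro hmem
      exact hv₀.2 (Finset.mem_of_mem_erase hmem))]
    rw [Finset.card_erase_of_mem hu₀.1, hyk]
    omega
  have hxy₂ : x ∩ insert v₀ (y.erase u₀) = x ∩ y := by
    ext a
    simp only [Finset.mem_inter, Finset.mem_insert, Finset.mem_erase]
    constructor
    · rintro ⟨hax, rfl | ⟨_, hay⟩⟩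
      · exact absurd hax hv₀.1
      · exact ⟨hax, hay⟩
    · rintro ⟨hax, hay⟩
      refine ⟨hax, Or.inr ⟨?_, hay⟩⟩
      rintro rfl
      exact hu₀.2 hax
  have hy₂mem : insert v₀ (y.erase u₀) ∈ A₀ :=
    stab hA₀O hA₀SC hblock hx hy ht1 ht2 hy₂k (Or.inl (by rw [hxy₂]))
  have hyy₂ : y ∩ insert v₀ (y.erase u₀) = y.erase u₀ := by
    ext a
    simp only [Finset.mem_inter, Finset.mem_insert, Finset.mem_erase]
    constructor
    · rintro ⟨hay, rfl | ⟨hne', _⟩⟩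
      · exact absurd hay hv₀.2
      · exact ⟨hne', hay⟩
    · rintro ⟨hne', hay⟩
      exact ⟨hay, Or.inr ⟨hne', hay⟩⟩
  have hyy₂card : (y ∩ insert v₀ (y.erase u₀)).card = k - 1 := by
    rw [hyy₂, Finset.card_erase_of_mem hu₀.1, hyk]
  -- goodness and spreading
  have hstep : ∀ u z : Finset (Fin (2*k)),
      (u ∈ A₀ ∧ ∃ p ∈ A₀, ((u ∩ p).card = 1 ∨ (u ∩ p).card = k - 1)) →
      z.card = k → (u ∩ z).card = k - 1 →
      (z ∈ A₀ ∧ ∃ p ∈ A₀, ((z ∩ p).card = 1 ∨ (z ∩ p).card = k - 1)) := by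
    intro u z hu hzk huz
    obtain ⟨huA, p, hpA, hcl⟩ := hu
    have ht1' : 1 ≤ (u ∩ p).card := by rcases hcl with h | h <;> omega
    have ht2' : (u ∩ p).card < k := by rcases hcl with h | h <;> omega
    have hclass : (u ∩ z).card = (u ∩ p).card ∨ (u ∩ z).card + (u ∩ p).card = k := by
      rcases hcl with h | h
      · right; omega
      · left; omega
    have hz : z ∈ A₀ := stab hA₀O hA₀SC hblock huA hpA ht1' ht2' hzk hclass
    exact ⟨hz, u, huA, Or.inr (by rw [Finset.inter_comm]; exact huz)⟩
  have hspread : ∀ m : ℕ, ∀ u w : Finset (Fin (2*k)),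
      (u ∈ A₀ ∧ ∃ p ∈ A₀, ((u ∩ p).card = 1 ∨ (u ∩ p).card = k - 1)) →
      w.card = k → (w \ u).card = m →
      (w ∈ A₀ ∧ ∃ p ∈ A₀, ((w ∩ p).card = 1 ∨ (w ∩ p).card = k - 1)) := by
    intro m
    induction m with
    | zero =>
      intro u w hu hwk h0
      have huk : u.card = k := mem_Om.1 (hA₀O hu.1)
      have hsub : w ⊆ u := by
        rw [← Finset.sdiff_eq_empty_iff_subset]
        exact Finset.card_eq_zero.1 h0
      have : w = u := Finset.eq_of_subset_of_card_le hsub (by omega)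
      rwa [this]
    | succ m ih =>
      intro u w hu hwk hsm
      have huk : u.card = k := mem_Om.1 (hA₀O hu.1)
      have hwne : (w \ u).Nonempty := by rw [← Finset.card_pos, hsm]; omega
      obtain ⟨β, hβ⟩ := hwne
      have hβ' := Finset.mem_sdiff.1 hβ
      have ha1 : (w ∩ u).card + (w \ u).card = w.card := Finset.card_inter_add_card_sdiff w u
      have ha2 : (u ∩ w).card + (u \ w).card = u.card := Finset.card_inter_add_card_sdiff u w
      rw [Finset.inter_comm u w] at ha2
      have huwne : (u \ w).Nonempty := by rw [← Finset.card_pos]; omega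
      obtain ⟨α, hα⟩ := huwne
      have hα' := Finset.mem_sdiff.1 hα
      have hu'k : (insert β (u.erase α)).card = k := by
        rw [Finset.card_insert_of_notMem (by
          intro hmem
          exact hβ'.2 (Finset.mem_of_mem_erase hmem))]
        rw [Finset.card_erase_of_mem hα'.1, huk]
        omega
      have huu' : u ∩ insert β (u.erase α) = u.erase α := by
        ext a
        simp only [Finset.mem_inter, Finset.mem_insert, Finset.mem_erase]
        constructor
        · rintro ⟨hau, rfl | ⟨hne', _⟩⟩
          · exact absurd hau hβ'.2
          · exact ⟨hne', hau⟩
        · rintro ⟨hne', hau⟩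
          exact ⟨hau, Or.inr ⟨hne', hau⟩⟩
      have hgu' := hstep u (insert β (u.erase α)) hu hu'k (by
        rw [huu', Finset.card_erase_of_mem hα'.1, huk])
      have hwu' : w \ insert β (u.erase α) = (w \ u).erase β := by
        ext a
        simp only [Finset.mem_sdiff, Finset.mem_insert, Finset.mem_erase]
        constructor
        · rintro ⟨haw, hnot⟩
          push_neg at hnot
          refine ⟨hnot.1, haw, ?_⟩
          intro hau
          have haα : a ≠ α := by rintro rfl; exact hα'.2 haw
          exact (hnot.2 haα) hau
        · rintro ⟨hne', haw, hau⟩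
          refine ⟨haw, ?_⟩
          rintro (rfl | ⟨_, hau'⟩)
          · exact hne' rfl
          · exact hau hau'
      exact ih (insert β (u.erase α)) w hgu' hwk (by
        rw [hwu', Finset.card_erase_of_mem hβ, hsm]
        omega)
  -- conclude A₀ = Om k and contradiction
  apply hA₀nb
  have hgy : y ∈ A₀ ∧ ∃ p ∈ A₀, ((y ∩ p).card = 1 ∨ (y ∩ p).card = k - 1) :=
    ⟨hy, insert v₀ (y.erase u₀), hy₂mem, Or.inr hyy₂card⟩
  have hAOm : A₀ = Om k := by
    apply Finset.Subset.antisymm hA₀O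
    intro w hw
    exact (hspread ((w \ y).card) y w hgy (mem_Om.1 hw) rfl).1
  rw [hAOm]
  exact nb_Om_self hJr hJne

end Atoms

end Cross5

theorem stmt5 {k : ℕ} (hk : 2 ≤ k)
    (L : Finset ℕ) (hL : L ⊆ Finset.range (k + 1))
    (hsym : ∀ i ≤ k, (i ∈ L ↔ k - i ∈ L))
    (hLne : L ≠ Finset.range (k + 1))
    (A B : Finset (Finset (Fin (2 * k)))) (hA : A.Nonempty) (hB : B.Nonempty)
    (hAk : ∀ a ∈ A, a.card = k) (hBk : ∀ b ∈ B, b.card = k)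
    (hcross : ∀ a ∈ A, ∀ b ∈ B, (a ∩ b).card ∈ L) :
    A.card + B.card ≤ ∑ i ∈ L, Nat.choose k i * Nat.choose k (k - i) + 2 := by
  classical
  set J := (range (k+1)).filter (fun j => j ∉ L) with hJ
  have hJr : J ⊆ range (k+1) := Finset.filter_subset _ _
  have hmemJ : ∀ j, j ∈ J ↔ j < k+1 ∧ j ∉ L := by
    intro j; rw [hJ, Finset.mem_filter, Finset.mem_range]
  have hJsym : ∀ j ≤ k, (j ∈ J ↔ k - j ∈ J) := by
    intro j hj
    rw [hmemJ, hmemJ]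
    have h2 : k - j ≤ k := by omega
    have e : k - (k - j) = j := by omega
    constructor
    · rintro ⟨_, hnl⟩
      refine ⟨by omega, fun hc => hnl ?_⟩
      have := (hsym (k-j) h2).1 hc
      rwa [e] at this
    · rintro ⟨_, hnl⟩
      refine ⟨by omega, fun hc => hnl ?_⟩
      exact (hsym j hj).1 hc
  have hJne : J.Nonempty := by
    have hss : L ⊂ range (k+1) := Finset.ssubset_iff_subset_ne.2 ⟨hL, hLne⟩
    obtain ⟨j, hjr, hjl⟩ := Finset.exists_of_ssubset hss
    exact ⟨j, (hmemJ j).2 ⟨Finset.mem_range.1 hjr, hjl⟩⟩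
  set X := A ∪ A.image (fun a => aᶜ) with hX
  have hXO : X ⊆ Om k := by
    intro s hs
    rw [hX, Finset.mem_union] at hs
    rcases hs with h | h
    · rw [mem_Om]; exact hAk s h
    · rw [Finset.mem_image] at h; obtain ⟨a, ha, rfl⟩ := h
      rw [mem_Om]; exact compl_card (hAk a ha)
  have hSCX : SC X := by
    intro s hs
    rw [hX, Finset.mem_union] at hs ⊢
    rcases hs with h | h
    · exact Or.inr (Finset.mem_image_of_mem _ h)
    · rw [Finset.mem_image] at h; obtain ⟨a, ha, rfl⟩ := h
      left; rwa [compl_compl]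
  have hXne : X.Nonempty := hA.mono Finset.subset_union_left
  have hBdis : ∀ b ∈ B, b ∉ nb k J X := by
    intro b hb hc
    rw [mem_nb] at hc
    obtain ⟨hbk, s, hsX, hsJ⟩ := hc
    rw [hX, Finset.mem_union] at hsX
    rcases hsX with h | h
    · have := hcross s h b hb
      exact ((hmemJ _).1 hsJ).2 this
    · rw [Finset.mem_image] at h; obtain ⟨a, ha, rfl⟩ := h
      have hLab := hcross a ha b hb
      have habk : (a ∩ b).card ≤ k := inter_card_le_left (hAk a ha)
      have he : (aᶜ ∩ b).card = k - (a ∩ b).card := compl_inter_card (hBk b hb)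
      apply ((hmemJ _).1 hsJ).2
      rw [he]
      exact (hsym _ habk).1 hLab
  have hnbne : nb k J X ≠ Om k := by
    obtain ⟨b, hb⟩ := hB
    intro hc
    apply hBdis b hb
    rw [hc, mem_Om]
    exact hBk b hb
  have hVd : Vd k J X := ⟨hXO, hSCX, hXne, hnbne⟩
  have hexp := expansion hk hJr hJsym hJne hVd
  have hBsub : B ⊆ Om k := fun b hb => mem_Om.2 (hBk b hb)
  have hdisj : Disjoint B (nb k J X) := Finset.disjoint_left.2 hBdis
  have hc2 : B.card + (nb k J X).card ≤ (Om k).card := by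
    rw [← Finset.card_union_of_disjoint hdisj]
    exact Finset.card_le_card (Finset.union_subset hBsub nb_subset_Om)
  have hc3 : A.card ≤ X.card := Finset.card_le_card Finset.subset_union_left
  have hfL : (range (k+1)).filter (fun i => i ∈ L) = L := by
    ext i
    simp only [Finset.mem_filter, Finset.mem_range]
    constructor
    · rintro ⟨_, h⟩; exact h
    · intro h; exact ⟨Finset.mem_range.1 (hL h), h⟩
  have hc4 : (Om k).card = (∑ i ∈ L, k.choose i * k.choose (k-i))
      + (∑ j ∈ J, k.choose j * k.choose (k-j)) := by
    rw [Om_card, vandermonde_2k,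
      ← Finset.sum_filter_add_sum_filter_not (range (k+1)) (fun i => i ∈ L)
        (fun i => k.choose i * k.choose (k-i)), hfL, hJ]
  omega
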